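/- Let p, q be coprime positive integers with q ≥ 2, and let α be real. The x- and y-components of the electric field at (0,0,α) from the uniformly charged (p,q)-torus knot vanish; equivalently, the integral from 0 to 2π of [(cos(qφ)+2) e^{ipφ} √(q^2 + p^2(2+cos(qφ))^2)] / (α^2 + 2α sin(qφ) + 5 + 4cos(qφ))^{3/2} dφ equals 0. -/

import Mathlib

open Complex in
/-- The x- and y-components of the electric field of a uniformly charged
(p,q)-torus knot vanish on the z-axis. -/
theorem torus_knot_field_xy_vanish (p q : ℕ) (hp : 0 < p) (hq : 2 ≤ q)
    (hpq : Nat.Coprime p q) (α : ℝ) :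
    ∫ φ in (0:ℝ)..(2 * Real.pi),
      ((Real.cos (q * φ) + 2 : ℝ) : ℂ) * Complex.exp ((p : ℂ) * Complex.I * (φ : ℂ)) *
        ((Real.sqrt ((q : ℝ) ^ 2 + (p : ℝ) ^ 2 * (2 + Real.cos (q * φ)) ^ 2) : ℝ) : ℂ) /
        (((α ^ 2 + 2 * α * Real.sin (q * φ) + 5 + 4 * Real.cos (q * φ)) ^ ((3:ℝ)/2) : ℝ) : ℂ)
      = 0 := by
  have hq0 : (q:ℝ) ≠ 0 := Nat.cast_ne_zero.mpr (by omega)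
  set g : ℝ → ℂ := fun φ =>
      ((Real.cos (q * φ) + 2 : ℝ) : ℂ) * Complex.exp ((p : ℂ) * Complex.I * (φ : ℂ)) *
        ((Real.sqrt ((q : ℝ) ^ 2 + (p : ℝ) ^ 2 * (2 + Real.cos (q * φ)) ^ 2) : ℝ) : ℂ) /
        (((α ^ 2 + 2 * α * Real.sin (q * φ) + 5 + 4 * Real.cos (q * φ)) ^ ((3:ℝ)/2) : ℝ) : ℂ)
    with hg
  set c : ℂ := Complex.exp ((p:ℂ) * Complex.I * (2 * Real.pi / q)) with hc
  set I0 : ℂ := ∫ φ in (0:ℝ)..(2 * Real.pi), g φ with hI0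
  have hqarg : ∀ x : ℝ, (q:ℝ) * (x + 2 * Real.pi / q) = (q:ℝ) * x + 2 * Real.pi := by
    intro x; field_simp
  have key : ∀ x : ℝ, g (x + 2 * Real.pi / q) = c * g x := by
    intro x
    simp only [hg]
    rw [hqarg, Real.cos_add_two_pi, Real.sin_add_two_pi]
    have hexp : Complex.exp ((p:ℂ) * Complex.I * ((x + 2 * Real.pi / q : ℝ) : ℂ))
        = c * Complex.exp ((p:ℂ) * Complex.I * (x:ℂ)) := by
      rw [hc, ← Complex.exp_add]
      congr 1
      push_cast
      ring
    rw [hexp]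
    ring
  have per : Function.Periodic g (2 * Real.pi) := by
    intro x
    simp only [hg]
    have h1 : (q:ℝ) * (x + 2 * Real.pi) = (q:ℝ) * x + (q:ℕ) * (2 * Real.pi) := by
      push_cast; ring
    rw [h1, Real.cos_add_nat_mul_two_pi, Real.sin_add_nat_mul_two_pi]
    have hexp : Complex.exp ((p:ℂ) * Complex.I * ((x + 2 * Real.pi : ℝ) : ℂ))
        = Complex.exp ((p:ℂ) * Complex.I * (x:ℂ)) := by
      rw [show ((p:ℂ) * Complex.I * ((x + 2 * Real.pi : ℝ) : ℂ))
          = (p:ℂ) * Complex.I * (x:ℂ) + (p:ℤ) * (2 * (Real.pi:ℂ) * Complex.I) by push_cast; ring,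
        Complex.exp_add, Complex.exp_int_mul_two_pi_mul_I, mul_one]
    rw [hexp]
  have e1 : I0 = ∫ φ in (2 * Real.pi / q)..(2 * Real.pi / q + 2 * Real.pi), g φ := by
    simpa using per.intervalIntegral_add_eq 0 (2 * Real.pi / q)
  have e2 : (∫ φ in (2 * Real.pi / q)..(2 * Real.pi / q + 2 * Real.pi), g φ)
      = ∫ φ in (0:ℝ)..(2 * Real.pi), g (φ + 2 * Real.pi / q) := by
    rw [intervalIntegral.integral_comp_add_right]
    congr 1 <;> ring
  have e3 : (∫ φ in (0:ℝ)..(2 * Real.pi), g (φ + 2 * Real.pi / q)) = c * I0 := by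
    simp only [key]
    rw [hI0, intervalIntegral.integral_const_mul]
  have hI : I0 = c * I0 := e1.trans (e2.trans e3)
  have hc1 : c ≠ 1 := by
    intro h
    rw [hc, Complex.exp_eq_one_iff] at h
    obtain ⟨n, hn⟩ := h
    have hq0' : (q:ℂ) ≠ 0 := Nat.cast_ne_zero.mpr (by omega)
    have hpi : (Real.pi:ℂ) ≠ 0 := by exact_mod_cast Real.pi_ne_zero
    have hp' : (p:ℂ) = n * q := by
      field_simp at hn
      have h2 : (p:ℂ) * (2 * (Real.pi:ℂ) * Complex.I)
          = (n * q) * (2 * (Real.pi:ℂ) * Complex.I) := by linear_combination (2 * (Real.pi:ℂ) * Complex.I) * hn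
      exact mul_right_cancel₀ (by simp [hpi, Complex.I_ne_zero, Real.pi_ne_zero]) h2
    have hdvd : q ∣ p := by
      have : (p:ℤ) = n * q := by exact_mod_cast hp'
      exact Int.ofNat_dvd.mp ⟨n, by rw [this, mul_comm]⟩
    have := hpq.symm.eq_one_of_dvd hdvd
    omega
  have h0 : (1 - c) * I0 = 0 := by rw [sub_mul, one_mul]; exact sub_eq_zero.mpr hI
  rcases mul_eq_zero.mp h0 with h | h
  · exact absurd (by linear_combination -h) hc1
  · exact h
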